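/- Let μ₁, μ₂ ∈ (0, 2π), ψ > 0, and let p_{M₁} = μ₁(1,0,0), p_{M₂} = μ₂(cosh ψ, sinh ψ, 0). Define u_R = exp(-p_{M₂}^aJ_a)·exp(-p_{M₁}^aJ_a) ∈ SL(2,ℝ). Then (1/2)tr(u_R) = cos(μ₁/2)cos(μ₂/2) - sin(μ₁/2)sin(μ₂/2)cosh ψ. -/

import Mathlib

open Matrix

noncomputable section

/-- Minkowski metric η = diag(1,-1,-1). -/
def η : Fin 3 → Fin 3 → ℝ := fun a b => if a = b then (if a = 0 then 1 else -1) else 0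

/-- Totally antisymmetric tensor with ε 0 1 2 = 1. -/
def ε : Fin 3 → Fin 3 → Fin 3 → ℝ := fun a b c =>
  (((b : ℕ) : ℝ) - ((a : ℕ) : ℝ)) * (((c : ℕ) : ℝ) - ((a : ℕ) : ℝ)) *
    (((c : ℕ) : ℝ) - ((b : ℕ) : ℝ)) / 2

/-- The sl(2,ℝ) generators. -/
def J : Fin 3 → Matrix (Fin 2) (Fin 2) ℝ :=
  ![(1/2 : ℝ) • !![0, 1; -1, 0], (1/2 : ℝ) • !![1, 0; 0, -1], (1/2 : ℝ) • !![0, 1; 1, 0]]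

/-- Minkowski inner product p·q = η_{ab} p^a q^b. -/
def ip (p q : Fin 3 → ℝ) : ℝ := ∑ a, ∑ b, η a b * p a * q b

/-- The sl(2,ℝ) element x^a J_a associated to x ∈ ℝ³. -/
def toM (x : Fin 3 → ℝ) : Matrix (Fin 2) (Fin 2) ℝ := ∑ a, x a • J a

attribute [local instance] Matrix.linftyOpNormedRing Matrix.linftyOpNormedAlgebra

lemma exp_key (B : Matrix (Fin 2) (Fin 2) ℝ) (hB : B * B = -1) (θ : ℝ) :
    NormedSpace.exp (θ • B)
      = Real.cos θ • (1 : Matrix (Fin 2) (Fin 2) ℝ) + Real.sin θ • B := by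
  let f : ℂ →ₐ[ℝ] Matrix (Fin 2) (Fin 2) ℝ := Complex.liftAux B hB
  have hf : Continuous f := f.toLinearMap.continuous_of_finiteDimensional
  have h1 : θ • B = f (θ * Complex.I) := by
    rw [show f (θ * Complex.I) = _ from Complex.liftAux_apply B hB _]
    simp
  rw [h1]
  erw [← NormedSpace.map_exp f hf]
  have h2 : NormedSpace.exp (θ * Complex.I) = Complex.exp (θ * Complex.I) := by
    rw [Complex.exp_eq_exp_ℂ]
  rw [h2, Complex.exp_mul_I]
  rw [show f _ = _ from Complex.liftAux_apply B hB _]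
  simp [Algebra.algebraMap_eq_smul_one, Complex.cos_ofReal_re, Complex.sin_ofReal_re]

theorem stmt19 (μ₁ μ₂ ψ : ℝ) (h₁ : μ₁ ∈ Set.Ioo 0 (2 * Real.pi))
    (h₂ : μ₂ ∈ Set.Ioo 0 (2 * Real.pi)) (hψ : 0 < ψ) :
    (1/2) * (NormedSpace.exp (-(toM (μ₂ • ![Real.cosh ψ, Real.sinh ψ, 0])))
        * NormedSpace.exp (-(toM (μ₁ • ![1, 0, 0])))).trace
      = Real.cos (μ₁/2) * Real.cos (μ₂/2)
        - Real.sin (μ₁/2) * Real.sin (μ₂/2) * Real.cosh ψ := by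
  have e1 : -(toM (μ₁ • ![1, 0, 0])) = (μ₁/2) • !![0, -1; 1, 0] := by
    ext i j
    fin_cases i <;> fin_cases j <;>
      simp [toM, _root_.J, Fin.sum_univ_three] <;> ring
  have e2 : -(toM (μ₂ • ![Real.cosh ψ, Real.sinh ψ, 0]))
      = (μ₂/2) • !![-Real.sinh ψ, -Real.cosh ψ; Real.cosh ψ, Real.sinh ψ] := by
    ext i j
    fin_cases i <;> fin_cases j <;>
      simp [toM, _root_.J, Fin.sum_univ_three] <;> ring
  have hB1 : (!![0, -1; 1, 0] : Matrix (Fin 2) (Fin 2) ℝ) * !![0, -1; 1, 0] = -1 := by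
    ext i j; fin_cases i <;> fin_cases j <;>
      simp [Matrix.mul_apply, Fin.sum_univ_two, Matrix.one_apply]
  have hB2 : (!![-Real.sinh ψ, -Real.cosh ψ; Real.cosh ψ, Real.sinh ψ]
        : Matrix (Fin 2) (Fin 2) ℝ)
      * !![-Real.sinh ψ, -Real.cosh ψ; Real.cosh ψ, Real.sinh ψ] = -1 := by
    have h := Real.cosh_sq_sub_sinh_sq ψ
    ext i j; fin_cases i <;> fin_cases j <;>
      simp [Matrix.mul_apply, Fin.sum_univ_two, Matrix.one_apply] <;> nlinarith
  rw [e1, e2, exp_key _ hB1, exp_key _ hB2]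
  simp [Matrix.trace, Matrix.diag, Matrix.mul_apply, Fin.sum_univ_two, Matrix.one_apply]
  ring
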